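/- Let M be a finite set of goods and let N be a set of n ≥ 1 agents, each with an additive valuation v_i : 2^M → ℝ≥0. If v_i(M) ≥ n for every agent i, and v_i({g}) < 1 for every agent i and every good g ∈ M, then there exists an allocation with copies (A_1,…,A_n), A_i ⊆ M, such that v_i(A_i) ≥ 1 for every agent i, each good belongs to at most two of the bundles, and at most n−1 goods belong to two bundles. -/

import Mathlib

open Finset

/-- Auxiliary bag-filling lemma: given a finite set `N` of agents and a finset `S` of goods
containing a distinguished good `t`, if every agent in `N` values `S` at least `N.card`,
then there is an allocation (with copies) of subsets of `S` giving every agent in `N` value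
at least `1`, where each good is in at most two bundles, the distinguished good `t` is in at
most one bundle, and at most `N.card - 1` goods are in two bundles. -/
lemma aux4 {G : Type*} [DecidableEq G] {I : Type*} [DecidableEq I]
    (w : I → G → ℝ) (hw : ∀ i g, 0 ≤ w i g) (hsingle : ∀ i g, w i g < 1) :
    ∀ (k : ℕ) (N : Finset I) (S : Finset G) (t : G), N.card = k → t ∈ S →
    (∀ i ∈ N, (k : ℝ) ≤ ∑ g ∈ S, w i g) →
    ∃ A : I → Finset G,
      (∀ i ∈ N, (1:ℝ) ≤ ∑ g ∈ A i, w i g) ∧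
      (∀ i ∈ N, A i ⊆ S) ∧
      (∀ g, (N.filter fun j => g ∈ A j).card ≤ 2) ∧
      (N.filter fun j => t ∈ A j).card ≤ 1 ∧
      (S.filter fun g => (N.filter fun j => g ∈ A j).card = 2).card ≤ k - 1 := by
  classical
  intro k
  induction k with
  | zero =>
    intro N S t hcard ht _
    have hN : N = ∅ := card_eq_zero.mp hcard
    refine ⟨fun _ => ∅, ?_, ?_, ?_, ?_, ?_⟩ <;> simp [hN]
  | succ k ih =>
    intro N S t hcard ht hval
    have hNne : N.Nonempty := card_pos.mp (by omega)
    set 𝒯 := S.powerset.filter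
      (fun T => t ∈ T ∧ ∃ i ∈ N, (1:ℝ) ≤ ∑ g ∈ T, w i g) with h𝒯
    have hSmem : S ∈ 𝒯 := by
      obtain ⟨i0, hi0⟩ := hNne
      refine mem_filter.mpr ⟨mem_powerset_self S, ht, i0, hi0, ?_⟩
      have h1 : (1:ℝ) ≤ ((k+1 : ℕ) : ℝ) := by exact_mod_cast Nat.succ_pos k
      linarith [hval i0 hi0]
    obtain ⟨T, hT𝒯, hTmin⟩ := Finset.exists_min_image 𝒯 Finset.card ⟨S, hSmem⟩
    obtain ⟨hTS0, htT, i, hiN, hiT⟩ := mem_filter.mp hT𝒯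
    have hTS : T ⊆ S := mem_powerset.mp hTS0
    -- T is not just {t}
    have hTne : T ≠ {t} := by
      intro h
      rw [h, sum_singleton] at hiT
      exact absurd hiT (not_le.mpr (hsingle i t))
    have hex : ∃ t' ∈ T, t' ≠ t := by
      by_contra h
      push_neg at h
      exact hTne (Finset.Subset.antisymm (fun x hx => mem_singleton.mpr (h x hx))
        (singleton_subset_iff.mpr htT))
    obtain ⟨t', ht'T, ht'ne⟩ := hex
    -- minimality consequence
    have hsmall : ∀ j ∈ N, ∑ g ∈ T.erase t', w j g < 1 := by
      intro j hj
      by_contra h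
      push_neg at h
      have hmem : T.erase t' ∈ 𝒯 := mem_filter.mpr
        ⟨mem_powerset.mpr ((erase_subset _ _).trans hTS),
          mem_erase.mpr ⟨Ne.symm ht'ne, htT⟩, j, hj, h⟩
      have h1 := hTmin _ hmem
      have h2 : (T.erase t').card = T.card - 1 := card_erase_of_mem ht'T
      have h3 : 1 ≤ T.card := card_pos.mpr ⟨t', ht'T⟩
      omega
    set S' := insert t' (S \ T) with hS'
    set N' := N.erase i with hN'
    have hN'card : N'.card = k := by
      rw [hN', card_erase_of_mem hiN, hcard]; omega
    have ht'S' : t' ∈ S' := mem_insert_self _ _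
    have hS'S : S' ⊆ S := insert_subset (hTS ht'T) (sdiff_subset)
    have hval' : ∀ j ∈ N', (k : ℝ) ≤ ∑ g ∈ S', w j g := by
      intro j hj
      have hjN : j ∈ N := mem_of_mem_erase hj
      have h1 : ∑ g ∈ S', w j g = w j t' + ∑ g ∈ S \ T, w j g :=
        sum_insert (by simp [ht'T])
      have h2 : ∑ g ∈ S \ T, w j g = ∑ g ∈ S, w j g - ∑ g ∈ T, w j g :=
        sum_sdiff_eq_sub hTS
      have h3 : ∑ g ∈ T.erase t', w j g = ∑ g ∈ T, w j g - w j t' :=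
        sum_erase_eq_sub ht'T
      have h4 := hsmall j hjN
      have h5 := hval j hjN
      have h6 : ((k+1 : ℕ) : ℝ) = (k : ℝ) + 1 := by push_cast; ring
      rw [h6] at h5
      linarith
    obtain ⟨A', hA'val, hA'sub, hA'two, hA'one, hA'dup⟩ :=
      ih N' S' t' hN'card ht'S' hval'
    set A : I → Finset G := fun j => if j = i then T else A' j with hA
    have hAi : A i = T := by simp [hA]
    have hAj : ∀ j, j ≠ i → A j = A' j := by intro j hj; simp [hA, hj]
    have hiN'' : i ∉ N' := notMem_erase _ _
    have hout : ∀ g, g ∉ S' → (N'.filter fun j => g ∈ A' j) = ∅ := by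
      intro g hg
      refine filter_eq_empty_iff.mpr (fun j hj hgA => hg (hA'sub j hj hgA))
    have hTnotS' : ∀ g ∈ T, g ≠ t' → g ∉ S' := by
      intro g hgT hgne hgS'
      rcases mem_insert.mp hgS' with h | h
      · exact hgne h
      · exact (mem_sdiff.mp h).2 hgT
    have hfilter : ∀ g, (N.filter fun j => g ∈ A j) =
        if g ∈ T then insert i (N'.filter fun j => g ∈ A' j)
        else N'.filter fun j => g ∈ A' j := by
      intro g
      have hNi : N = insert i N' := (insert_erase hiN).symm
      have hcongr : (N'.filter fun j => g ∈ A j)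
          = (N'.filter fun j => g ∈ A' j) := by
        refine filter_congr (fun j hj => ?_)
        rw [hAj j (ne_of_mem_erase hj)]
      rw [hNi, filter_insert, hcongr, hAi]
    refine ⟨A, ?_, ?_, ?_, ?_, ?_⟩
    · -- values
      intro j hj
      by_cases h : j = i
      · rw [h, hAi]; exact hiT
      · rw [hAj j h]; exact hA'val j (mem_erase.mpr ⟨h, hj⟩)
    · -- subsets
      intro j hj
      by_cases h : j = i
      · rw [h, hAi]; exact hTS
      · rw [hAj j h]; exact (hA'sub j (mem_erase.mpr ⟨h, hj⟩)).trans hS'S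
    · -- at most two bundles
      intro g
      rw [hfilter g]
      by_cases hgT : g ∈ T
      · rw [if_pos hgT]
        by_cases hgt' : g = t'
        · calc (insert i (N'.filter fun j => g ∈ A' j)).card
              ≤ (N'.filter fun j => g ∈ A' j).card + 1 := card_insert_le _ _
            _ ≤ 1 + 1 := by
                have := hA'one
                rw [hgt']
                omega
            _ = 2 := rfl
        · rw [hout g (hTnotS' g hgT hgt')]
          simp
      · rw [if_neg hgT]
        exact hA'two g
    · -- distinguished good t in at most one bundle
      rw [hfilter t, if_pos htT, hout t (hTnotS' t htT (Ne.symm ht'ne))]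
      simp
    · -- at most k duplicated goods
      rcases Nat.eq_zero_or_pos k with hk | hk
      · have hN1 : N.card = 1 := by omega
        have hD : (S.filter fun g => (N.filter fun j => g ∈ A j).card = 2) = ∅ := by
          refine filter_eq_empty_iff.mpr (fun g _ h2 => ?_)
          have := card_le_card (filter_subset (fun j => g ∈ A j) N)
          omega
        rw [hD]
        simp
      · have hsub : (S.filter fun g => (N.filter fun j => g ∈ A j).card = 2) ⊆
            insert t' (S'.filter fun g => (N'.filter fun j => g ∈ A' j).card = 2) := by
          intro g hg
          obtain ⟨hgS, h2⟩ := mem_filter.mp hg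
          by_cases hgt' : g = t'
          · rw [hgt']; exact mem_insert_self _ _
          · refine mem_insert_of_mem (mem_filter.mpr ?_)
            rw [hfilter g] at h2
            by_cases hgT : g ∈ T
            · rw [if_pos hgT, hout g (hTnotS' g hgT hgt')] at h2
              simp at h2
            · rw [if_neg hgT] at h2
              have hne : (N'.filter fun j => g ∈ A' j).Nonempty := by
                rw [← card_pos, h2]; omega
              obtain ⟨j, hj⟩ := hne
              obtain ⟨hjN', hgA⟩ := mem_filter.mp hj
              exact ⟨hA'sub j hjN' hgA, h2⟩
        calc (S.filter fun g => (N.filter fun j => g ∈ A j).card = 2).card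
            ≤ (insert t' (S'.filter fun g =>
                (N'.filter fun j => g ∈ A' j).card = 2)).card := card_le_card hsub
          _ ≤ (S'.filter fun g =>
                (N'.filter fun j => g ∈ A' j).card = 2).card + 1 := card_insert_le _ _
          _ ≤ (k - 1) + 1 := by omega
          _ ≤ (k + 1) - 1 := by omega

/-- Bag-filling with copies: if every agent has additive valuation (given by
weights `w i`), values all the goods at least `n`, and values every single good strictly
below `1`, then there is an allocation with copies giving every agent value at least `1`,
in which every good belongs to at most two bundles and at most `n - 1` goods belong to
two bundles. -/
theorem stmt4 {G : Type*} [Fintype G] [DecidableEq G] (n : ℕ) (hn : 1 ≤ n)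
    (w : Fin n → G → ℝ)
    (hw : ∀ i g, 0 ≤ w i g)
    (htotal : ∀ i, (n : ℝ) ≤ ∑ g : G, w i g)
    (hsingle : ∀ i g, w i g < 1) :
    ∃ A : Fin n → Finset G,
      (∀ i, (1 : ℝ) ≤ ∑ g ∈ A i, w i g) ∧
      (∀ g : G, (Finset.univ.filter fun i => g ∈ A i).card ≤ 2) ∧
      (Finset.univ.filter fun g : G =>
        (Finset.univ.filter fun i => g ∈ A i).card = 2).card ≤ n - 1 := by
  classical
  have hGne : (Finset.univ : Finset G).Nonempty := by
    by_contra h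
    rw [not_nonempty_iff_eq_empty] at h
    have h1 := htotal ⟨0, hn⟩
    rw [show (Finset.univ : Finset G) = ∅ from h] at h1
    simp at h1
    have h2 : (1:ℝ) ≤ (n:ℝ) := by exact_mod_cast hn
    linarith
  obtain ⟨g0, hg0⟩ := hGne
  have hcard : (Finset.univ : Finset (Fin n)).card = n := by simp
  obtain ⟨A, hval, _, htwo, _, hdup⟩ :=
    aux4 w hw hsingle n (Finset.univ : Finset (Fin n)) (Finset.univ : Finset G) g0
      hcard hg0 (fun i _ => htotal i)
  exact ⟨A, fun i => hval i (mem_univ i), htwo, hdup⟩
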